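/- A valuation domain D is sharp if and only if D is pseudo-Dedekind. -/

import Mathlib

/-- A domain `R` is *sharp* if whenever `I ⊇ A*B` with `I, A, B` nonzero ideals,
there exist ideals `A' ⊇ A` and `B' ⊇ B` such that `I = A'*B'`. -/
def IsSharpDomain (R : Type*) [CommRing R] : Prop :=
  ∀ I A B : Ideal R, I ≠ ⊥ → A ≠ ⊥ → B ≠ ⊥ → A * B ≤ I →
    ∃ A' B' : Ideal R, A ≤ A' ∧ B ≤ B' ∧ I = A' * B'

/-- A domain is *pseudo-Dedekind* if the `v`-closure `(I⁻¹)⁻¹` of every nonzero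
ideal `I` is invertible (as a fractional ideal). -/
def IsPseudoDedekind (R : Type*) [CommRing R] [IsDomain R] : Prop :=
  ∀ I : Ideal R, I ≠ ⊥ →
    IsUnit (((I : FractionalIdeal (nonZeroDivisors R) (FractionRing R))⁻¹)⁻¹)

open FractionalIdeal

section Helpers

variable {R : Type*} [CommRing R] [IsDomain R]

local notation "F" => FractionalIdeal (nonZeroDivisors R) (FractionRing R)

lemma my_inv_ne_zero {I : F} (h : I ≠ 0) : I⁻¹ ≠ 0 := by
  have hd := FractionalIdeal.den_mem_inv (I := I) (by simpa using h)
  intro h0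
  rw [h0] at hd
  rw [FractionalIdeal.mem_zero_iff] at hd
  exact nonZeroDivisors.coe_ne_zero I.den
    ((IsFractionRing.injective R (FractionRing R)) (by simpa using hd))

lemma my_mul_inv_le_one (I : F) : I * I⁻¹ ≤ 1 := by
  by_cases h : I = 0
  · simp [h]
  · rw [FractionalIdeal.inv_eq, mul_comm]
    exact (FractionalIdeal.le_div_iff_mul_le h).mp le_rfl

lemma my_le_vclos (I : F) : I ≤ (I⁻¹)⁻¹ := by
  by_cases h : I = 0
  · rw [h]; exact zero_le _
  · rw [show (I⁻¹)⁻¹ = 1 / I⁻¹ from rfl]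
    exact (FractionalIdeal.le_div_iff_mul_le (my_inv_ne_zero h)).mpr (my_mul_inv_le_one I)

lemma my_vclos_mono {I J : F} (hI : I ≠ 0) (hJ : J ≠ 0) (h : I ≤ J) :
    (I⁻¹)⁻¹ ≤ (J⁻¹)⁻¹ :=
  FractionalIdeal.inv_anti_mono (my_inv_ne_zero hJ) (my_inv_ne_zero hI)
    (FractionalIdeal.inv_anti_mono hI hJ h)

lemma my_vclos_of_isUnit {I : F} (h : IsUnit I) : (I⁻¹)⁻¹ = I := by
  have h1 : I * I⁻¹ = 1 := (FractionalIdeal.mul_inv_cancel_iff_isUnit _).mpr h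
  exact (FractionalIdeal.right_inverse_eq _ I⁻¹ I (by rwa [mul_comm])).symm

lemma my_isUnit_spanSingleton {x : FractionRing R} (hx : x ≠ 0) :
    IsUnit (spanSingleton (nonZeroDivisors R) x) :=
  IsUnit.of_mul_eq_one _ (FractionalIdeal.spanSingleton_mul_inv _ hx)

lemma my_exists_mem_ne_zero {I : F} (h : I ≠ 0) : ∃ x : FractionRing R, x ∈ I ∧ x ≠ 0 := by
  have : (I : Submodule R (FractionRing R)) ≠ ⊥ := by
    intro hb
    apply h; rw [← FractionalIdeal.coeToSubmodule_eq_bot]; exact hb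
  exact Submodule.exists_mem_ne_zero_of_ne_bot this

lemma my_mul_ne_zero {I J : F} (hI : I ≠ 0) (hJ : J ≠ 0) : I * J ≠ 0 := by
  obtain ⟨x, hxI, hx0⟩ := my_exists_mem_ne_zero hI
  obtain ⟨y, hyJ, hy0⟩ := my_exists_mem_ne_zero hJ
  intro h0
  have : x * y ∈ I * J := FractionalIdeal.mul_mem_mul hxI hyJ
  rw [h0, FractionalIdeal.mem_zero_iff] at this
  exact (mul_ne_zero hx0 hy0) this

end Helpers

section Dir1

variable {R : Type*} [CommRing R] [IsDomain R]

local notation "F" => FractionalIdeal (nonZeroDivisors R) (FractionRing R)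

theorem sharp_to_pd (hs : IsSharpDomain R) : IsPseudoDedekind R := by
  intro I hI
  obtain ⟨d, hdI, hd0⟩ := Submodule.exists_mem_ne_zero_of_ne_bot hI
  have hspan : (Ideal.span {d} : Ideal R) ≠ ⊥ := by
    simpa [Ideal.span_singleton_eq_bot] using hd0
  set S : F := ((Ideal.span {d} : Ideal R) : F) with hSdef
  have hS0 : S ≠ 0 := FractionalIdeal.coeIdeal_ne_zero.mpr hspan
  have hSsingle : S = spanSingleton (nonZeroDivisors R) (algebraMap R (FractionRing R) d) :=
    FractionalIdeal.coeIdeal_span_singleton d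
  have hSunit : IsUnit S := by
    rw [hSsingle]
    exact my_isUnit_spanSingleton
      (fun h => hd0 ((IsFractionRing.to_map_eq_zero_iff (K := FractionRing R)).mp h))
  have hI0 : (I : F) ≠ 0 := FractionalIdeal.coeIdeal_ne_zero.mpr hI
  have hIinv0 : (I : F)⁻¹ ≠ 0 := my_inv_ne_zero hI0
  have hSleI : S ≤ (I : F) :=
    (FractionalIdeal.coeIdeal_le_coeIdeal _).mpr
      ((Ideal.span_singleton_le_iff_mem _).mpr hdI)
  have hX : S * (I : F)⁻¹ ≤ 1 := by
    calc S * (I : F)⁻¹ ≤ (I : F) * (I : F)⁻¹ := by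
          rw [mul_comm S, mul_comm (I : F)]
          exact mul_le_mul_right hSleI _
      _ ≤ 1 := my_mul_inv_le_one _
  obtain ⟨B, hB⟩ := FractionalIdeal.le_one_iff_exists_coeIdeal.mp hX
  have hB0 : (B : F) ≠ 0 := by rw [hB]; exact my_mul_ne_zero hS0 hIinv0
  have hBbot : B ≠ ⊥ := FractionalIdeal.coeIdeal_ne_zero.mp hB0
  have hIB : I * B ≤ Ideal.span {d} := by
    rw [← FractionalIdeal.coeIdeal_le_coeIdeal (FractionRing R),
      FractionalIdeal.coeIdeal_mul, hB]
    calc (I : F) * (S * (I : F)⁻¹) = S * ((I : F) * (I : F)⁻¹) := by ring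
      _ ≤ S * 1 := mul_le_mul_right (my_mul_inv_le_one _) _
      _ = S := mul_one S
  obtain ⟨A', B', hA', hB', hfac⟩ := hs (Ideal.span {d}) I B hspan hI hBbot hIB
  have hco : (A' : F) * (B' : F) = S := by
    rw [← FractionalIdeal.coeIdeal_mul, ← hfac]
  have hA'unit : IsUnit (A' : F) := isUnit_of_mul_isUnit_left (hco ▸ hSunit)
  have hB'unit : IsUnit (B' : F) := isUnit_of_mul_isUnit_right (hco ▸ hSunit)
  have hA'0 : (A' : F) ≠ 0 := by
    intro h0
    exact hS0 (by rw [← hco, h0, zero_mul])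
  have key : ((I : F)⁻¹)⁻¹ = (A' : F) := by
    apply le_antisymm
    · rw [← my_vclos_of_isUnit hA'unit]
      exact my_vclos_mono hI0 hA'0 ((FractionalIdeal.coeIdeal_le_coeIdeal _).mpr hA')
    · rw [show ((I : F)⁻¹)⁻¹ = 1 / (I : F)⁻¹ from rfl]
      rw [FractionalIdeal.le_div_iff_mul_le hIinv0]
      have hBB' : (B' : F) * (B' : F)⁻¹ = 1 :=
        (FractionalIdeal.mul_inv_cancel_iff_isUnit _).mpr hB'unit
      calc (A' : F) * (I : F)⁻¹
          = ((A' : F) * (B' : F)) * ((I : F)⁻¹ * (B' : F)⁻¹) := by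
            rw [show (A' : F) * (B' : F) * ((I : F)⁻¹ * (B' : F)⁻¹)
              = ((A' : F) * (I : F)⁻¹) * ((B' : F) * (B' : F)⁻¹) by ring, hBB', mul_one]
        _ = (S * (I : F)⁻¹) * (B' : F)⁻¹ := by rw [hco]; ring
        _ = (B : F) * (B' : F)⁻¹ := by rw [hB]
        _ ≤ (B' : F) * (B' : F)⁻¹ := by
            rw [mul_comm (B : F), mul_comm (B' : F)]
            exact mul_le_mul_right
              ((FractionalIdeal.coeIdeal_le_coeIdeal _).mpr hB') _
        _ = 1 := hBB'
  rw [key]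
  exact hA'unit

end Dir1

section Dir2

variable {R : Type*} [CommRing R] [IsDomain R] [ValuationRing R]

local notation "F" => FractionalIdeal (nonZeroDivisors R) (FractionRing R)

lemma my_span_total (x y : FractionRing R) :
    x ∈ Submodule.span R {y} ∨ y ∈ Submodule.span R {x} := by
  rcases eq_or_ne x 0 with rfl | hx
  · exact Or.inl (Submodule.zero_mem _)
  rcases eq_or_ne y 0 with rfl | hy
  · exact Or.inr (Submodule.zero_mem _)
  rcases ValuationRing.isInteger_or_isInteger R (x * y⁻¹) with ⟨c, hc⟩ | ⟨c, hc⟩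
  · left
    rw [Submodule.mem_span_singleton]
    exact ⟨c, by rw [Algebra.smul_def, hc, mul_assoc, inv_mul_cancel₀ hy, mul_one]⟩
  · right
    rw [Submodule.mem_span_singleton]
    refine ⟨c, ?_⟩
    rw [Algebra.smul_def, hc]
    field_simp

lemma my_span_finset (s : Finset (FractionRing R)) :
    ∃ x : FractionRing R, Submodule.span R (s : Set (FractionRing R)) =
      Submodule.span R {x} := by
  classical
  induction s using Finset.induction_on with
  | empty => exact ⟨0, by simp⟩
  | @insert a s ha ih =>
    obtain ⟨x, hx⟩ := ih
    rcases my_span_total a x with h | h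
    · refine ⟨x, ?_⟩
      rw [Finset.coe_insert, Submodule.span_insert, hx]
      rw [sup_eq_right.mpr]
      rwa [Submodule.span_le, Set.singleton_subset_iff]
    · refine ⟨a, ?_⟩
      rw [Finset.coe_insert, Submodule.span_insert, hx]
      rw [sup_eq_left.mpr]
      rwa [Submodule.span_le, Set.singleton_subset_iff]

lemma my_isUnit_spanSingleton_rep {I : F} (h : IsUnit I) :
    ∃ x : FractionRing R, x ≠ 0 ∧ I = spanSingleton (nonZeroDivisors R) x := by
  obtain ⟨s, hs⟩ := FractionalIdeal.fg_of_isUnit I h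
  obtain ⟨x, hx⟩ := my_span_finset s
  have hI : (I : Submodule R (FractionRing R)) = Submodule.span R {x} := by
    rw [← hs, hx]
  have hIx : I = spanSingleton (nonZeroDivisors R) x :=
    FractionalIdeal.coeToSubmodule_injective
      (hI.trans (FractionalIdeal.coe_spanSingleton _ x).symm)
  refine ⟨x, ?_, hIx⟩
  intro hx0
  rw [hx0, FractionalIdeal.spanSingleton_zero] at hIx
  exact h.ne_zero hIx

/-- The v-closure of a nonzero ideal, if invertible, is generated by a nonzero element. -/
lemma my_vclos_principal {J : Ideal R} (hJ : J ≠ ⊥)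
    (h : IsUnit (((J : F))⁻¹⁻¹)) :
    ∃ z : R, z ≠ 0 ∧ ((J : F)⁻¹)⁻¹ = ((Ideal.span {z} : Ideal R) : F) := by
  obtain ⟨x, hx0, hx⟩ := my_isUnit_spanSingleton_rep h
  have hle1 : ((J : F)⁻¹)⁻¹ ≤ 1 := by
    have h1 : ((1 : F)⁻¹)⁻¹ = 1 := my_vclos_of_isUnit isUnit_one
    rw [← h1]
    exact my_vclos_mono (FractionalIdeal.coeIdeal_ne_zero.mpr hJ) one_ne_zero
      FractionalIdeal.coeIdeal_le_one
  have hxmem : x ∈ ((J : F)⁻¹)⁻¹ := by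
    rw [hx]
    exact FractionalIdeal.mem_spanSingleton_self _ _
  obtain ⟨z, hz⟩ := (FractionalIdeal.mem_one_iff _).mp (hle1 hxmem)
  refine ⟨z, ?_, ?_⟩
  · intro h0; rw [h0, RingHom.map_zero] at hz; exact hx0 hz.symm
  · rw [hx, FractionalIdeal.coeIdeal_span_singleton, hz]

lemma my_coeIdeal_span_unit {c : R} (hc : c ≠ 0) :
    IsUnit (((Ideal.span {c} : Ideal R) : F)) := by
  rw [FractionalIdeal.coeIdeal_span_singleton]
  exact my_isUnit_spanSingleton
    (fun h => hc ((IsFractionRing.to_map_eq_zero_iff (K := FractionRing R)).mp h))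

/-- In a valuation domain, an ideal equals its principal v-closure or that times the
maximal ideal. -/
lemma my_ideal_eq_span_or_mul_max {J : Ideal R} {z : R} (hJ : J ≠ ⊥) (hz : z ≠ 0)
    (h : ((J : F)⁻¹)⁻¹ = ((Ideal.span {z} : Ideal R) : F)) :
    J = Ideal.span {z} ∨ J = Ideal.span {z} * IsLocalRing.maximalIdeal R := by
  have hJle : J ≤ Ideal.span {z} := by
    rw [← FractionalIdeal.coeIdeal_le_coeIdeal (FractionRing R), ← h]
    exact my_le_vclos _
  by_cases heq : J = Ideal.span {z}
  · exact Or.inl heq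
  right
  have key : ∀ m ∈ IsLocalRing.maximalIdeal R, z * m ∈ J := by
    intro m hm
    rcases eq_or_ne m 0 with rfl | hm0
    · simpa using J.zero_mem
    by_contra hzm
    have hzm0 : z * m ≠ 0 := mul_ne_zero hz hm0
    have hJle2 : J ≤ Ideal.span {z * m} := by
      intro j hj
      rcases ValuationRing.dvd_total (z * m) j with hd | hd
      · exact Ideal.mem_span_singleton.mpr hd
      · obtain ⟨t, ht⟩ := hd
        exact absurd (ht ▸ J.mul_mem_right t hj) hzm
    -- take v-closures
    have hvle : ((Ideal.span {z} : Ideal R) : F) ≤ ((Ideal.span {z * m} : Ideal R) : F) := by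
      rw [← h, ← my_vclos_of_isUnit (my_coeIdeal_span_unit hzm0)]
      exact my_vclos_mono (FractionalIdeal.coeIdeal_ne_zero.mpr hJ)
        (FractionalIdeal.coeIdeal_ne_zero.mpr (by
          simpa [Ideal.span_singleton_eq_bot] using hzm0))
        ((FractionalIdeal.coeIdeal_le_coeIdeal _).mpr hJle2)
    have hdvd : z * m ∣ z := Ideal.span_singleton_le_span_singleton.mp
      ((FractionalIdeal.coeIdeal_le_coeIdeal _).mp hvle)
    obtain ⟨s, hsz⟩ := hdvd
    have : m * s = 1 := by
      apply mul_left_cancel₀ hz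
      rw [mul_one, ← mul_assoc, ← hsz]
    exact hm (IsUnit.of_mul_eq_one s this)
  apply le_antisymm
  · intro j hj
    obtain ⟨r, hr⟩ := Ideal.mem_span_singleton.mp (hJle hj)
    have hru : ¬ IsUnit r := by
      intro hru
      apply heq
      apply le_antisymm hJle
      have hzJ : z ∈ J := by
        obtain ⟨u, hu⟩ := hru
        have : z = j * ↑u⁻¹ := by
          rw [hr, mul_assoc, ← hu, ← Units.val_mul, mul_inv_cancel, Units.val_one, mul_one]
        rw [this]
        exact J.mul_mem_right _ hj
      rwa [Ideal.span_singleton_le_iff_mem]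
    rw [hr]
    exact Ideal.mul_mem_mul (Ideal.mem_span_singleton_self z) hru
  · rw [Ideal.mul_le]
    intro r hr m hm
    obtain ⟨c, hc⟩ := Ideal.mem_span_singleton.mp hr
    rw [hc, mul_comm z c, mul_assoc]
    exact J.mul_mem_left c (key m hm)

lemma my_mul_right_mono (I : F) : Monotone (· * I) := fun _ _ h => by
  simpa [mul_comm] using mul_le_mul_right h I

theorem pd_to_sharp (hpd : IsPseudoDedekind R) : IsSharpDomain R := by
  intro I A B hI hA hB hAB
  rcases Std.Total.total (r := (LE.le : Ideal R → Ideal R → Prop)) A I with hAI | hIA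
  · exact ⟨I, ⊤, hAI, le_top, (Ideal.mul_top I).symm⟩
  rcases Std.Total.total (r := (LE.le : Ideal R → Ideal R → Prop)) B I with hBI | hIB
  · exact ⟨⊤, I, le_top, hBI, (Ideal.top_mul I).symm⟩
  obtain ⟨z, hz0, hzv⟩ := my_vclos_principal hI (hpd I hI)
  obtain ⟨a, ha0, hav⟩ := my_vclos_principal hA (hpd A hA)
  obtain ⟨b, hb0, hbv⟩ := my_vclos_principal hB (hpd B hB)
  have hI0 : (I : F) ≠ 0 := FractionalIdeal.coeIdeal_ne_zero.mpr hI
  have hA0 : (A : F) ≠ 0 := FractionalIdeal.coeIdeal_ne_zero.mpr hA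
  have hB0 : (B : F) ≠ 0 := FractionalIdeal.coeIdeal_ne_zero.mpr hB
  have hAa : A ≤ Ideal.span {a} := by
    rw [← FractionalIdeal.coeIdeal_le_coeIdeal (FractionRing R), ← hav]
    exact my_le_vclos _
  have hBb : B ≤ Ideal.span {b} := by
    rw [← FractionalIdeal.coeIdeal_le_coeIdeal (FractionRing R), ← hbv]
    exact my_le_vclos _
  have hza : a ∣ z := by
    have h1 : ((I : F)⁻¹)⁻¹ ≤ ((A : F)⁻¹)⁻¹ :=
      my_vclos_mono hI0 hA0 ((FractionalIdeal.coeIdeal_le_coeIdeal _).mpr hIA)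
    rw [hzv, hav] at h1
    exact Ideal.span_singleton_le_span_singleton.mp
      ((FractionalIdeal.coeIdeal_le_coeIdeal _).mp h1)
  have hzb : b ∣ z := by
    have h1 : ((I : F)⁻¹)⁻¹ ≤ ((B : F)⁻¹)⁻¹ :=
      my_vclos_mono hI0 hB0 ((FractionalIdeal.coeIdeal_le_coeIdeal _).mpr hIB)
    rw [hzv, hbv] at h1
    exact Ideal.span_singleton_le_span_singleton.mp
      ((FractionalIdeal.coeIdeal_le_coeIdeal _).mp h1)
  -- key divisibility : z ∣ a * b
  have hzab : z ∣ a * b := by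
    set Z : F := ((Ideal.span {z} : Ideal R) : F) with hZ
    have hZu : IsUnit Z := my_coeIdeal_span_unit hz0
    have hZZ : Z * Z⁻¹ = 1 := (FractionalIdeal.mul_inv_cancel_iff_isUnit _).mpr hZu
    have hZZ' : Z⁻¹ * Z = 1 := by rw [mul_comm]; exact hZZ
    have h1 : (A : F) * (B : F) ≤ Z := by
      rw [← hzv, ← FractionalIdeal.coeIdeal_mul]
      exact le_trans ((FractionalIdeal.coeIdeal_le_coeIdeal _).mpr hAB) (my_le_vclos _)
    have h2 : (A : F) * Z⁻¹ ≤ (B : F)⁻¹ := by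
      rw [FractionalIdeal.inv_eq (I := (B : F)),
        FractionalIdeal.le_div_iff_mul_le hB0]
      calc (A : F) * Z⁻¹ * (B : F) = ((A : F) * (B : F)) * Z⁻¹ := by ring
        _ ≤ Z * Z⁻¹ := my_mul_right_mono _ h1
        _ = 1 := hZZ
    have h4 : (((B : F)⁻¹)⁻¹ * Z⁻¹) * (A : F) ≤ 1 := by
      calc (((B : F)⁻¹)⁻¹ * Z⁻¹) * (A : F)
          = ((B : F)⁻¹)⁻¹ * ((A : F) * Z⁻¹) := by ring
        _ ≤ ((B : F)⁻¹)⁻¹ * (B : F)⁻¹ := mul_le_mul_right h2 _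
        _ = (B : F)⁻¹ * ((B : F)⁻¹)⁻¹ := by ring
        _ ≤ 1 := my_mul_inv_le_one _
    have h5 : ((B : F)⁻¹)⁻¹ * Z⁻¹ ≤ (A : F)⁻¹ := by
      rw [FractionalIdeal.inv_eq (I := (A : F)),
        FractionalIdeal.le_div_iff_mul_le hA0]
      exact h4
    have h6 : ((A : F)⁻¹)⁻¹ * (((B : F)⁻¹)⁻¹ * Z⁻¹) ≤ 1 := by
      calc ((A : F)⁻¹)⁻¹ * (((B : F)⁻¹)⁻¹ * Z⁻¹)
          ≤ ((A : F)⁻¹)⁻¹ * (A : F)⁻¹ := mul_le_mul_right h5 _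
        _ = (A : F)⁻¹ * ((A : F)⁻¹)⁻¹ := by ring
        _ ≤ 1 := my_mul_inv_le_one _
    have h7 : ((A : F)⁻¹)⁻¹ * ((B : F)⁻¹)⁻¹ ≤ Z := by
      have e : ((A : F)⁻¹)⁻¹ * ((B : F)⁻¹)⁻¹
          = (((A : F)⁻¹)⁻¹ * (((B : F)⁻¹)⁻¹ * Z⁻¹)) * Z := by
        rw [mul_assoc, mul_assoc, hZZ', mul_one]
      rw [e]
      calc (((A : F)⁻¹)⁻¹ * (((B : F)⁻¹)⁻¹ * Z⁻¹)) * Z ≤ 1 * Z := my_mul_right_mono _ h6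
        _ = Z := one_mul Z
    rw [hav, hbv, ← FractionalIdeal.coeIdeal_mul,
      Ideal.span_singleton_mul_span_singleton] at h7
    exact Ideal.span_singleton_le_span_singleton.mp
      ((FractionalIdeal.coeIdeal_le_coeIdeal _).mp h7)
  obtain ⟨c, hc⟩ := hza
  rcases my_ideal_eq_span_or_mul_max hI hz0 hzv with hIc | hIc
  · -- I = span z
    obtain ⟨t, ht⟩ := hzab
    have hcb : c ∣ b := ⟨t, mul_left_cancel₀ ha0 (by rw [ht, hc, mul_assoc])⟩
    refine ⟨Ideal.span {a}, Ideal.span {c}, hAa, ?_, ?_⟩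
    · intro x hx
      exact Ideal.mem_span_singleton.mpr
        (dvd_trans hcb (Ideal.mem_span_singleton.mp (hBb hx)))
    · rw [Ideal.span_singleton_mul_span_singleton, ← hc]; exact hIc
  · -- I = span z * M
    rcases my_ideal_eq_span_or_mul_max hA ha0 hav with hAc | hAc
    · -- A = span a
      rcases my_ideal_eq_span_or_mul_max hB hb0 hbv with hBc | hBc
      · -- A = span a, B = span b
        obtain ⟨t, ht⟩ := hzab
        have habI : a * b ∈ I := by
          have haA : a ∈ A := by rw [hAc]; exact Ideal.mem_span_singleton_self a
          have hbB : b ∈ B := by rw [hBc]; exact Ideal.mem_span_singleton_self b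
          exact hAB (Ideal.mul_mem_mul haA hbB)
        rw [hIc] at habI
        obtain ⟨m, hm, hzm⟩ := Ideal.mem_span_singleton_mul.mp habI
        have htm : t = m := mul_left_cancel₀ hz0 (ht.symm.trans hzm.symm)
        have hbct : b = c * t := mul_left_cancel₀ ha0 (by rw [ht, hc, mul_assoc])
        refine ⟨Ideal.span {a}, Ideal.span {c} * IsLocalRing.maximalIdeal R, hAa, ?_, ?_⟩
        · rw [hBc, Ideal.span_singleton_le_iff_mem, hbct]
          exact Ideal.mul_mem_mul (Ideal.mem_span_singleton_self c) (htm ▸ hm)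
        · rw [hIc, ← mul_assoc, Ideal.span_singleton_mul_span_singleton, ← hc]
      · -- A = span a, B = span b * M
        obtain ⟨c', hc'⟩ := hzb
        have hca : c' ∣ a := by
          obtain ⟨t, ht⟩ := hzab
          exact ⟨t, mul_left_cancel₀ hb0 (by rw [mul_comm b a, ht, hc', mul_assoc])⟩
        refine ⟨Ideal.span {c'}, B, ?_, le_rfl, ?_⟩
        · intro x hx
          exact Ideal.mem_span_singleton.mpr
            (dvd_trans hca (Ideal.mem_span_singleton.mp (hAa hx)))
        · rw [hBc, hIc, ← mul_assoc, Ideal.span_singleton_mul_span_singleton,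
            mul_comm c' b, ← hc']
    · -- A = span a * M
      refine ⟨A, Ideal.span {c}, le_rfl, ?_, ?_⟩
      · obtain ⟨t, ht⟩ := hzab
        have hcb : c ∣ b := ⟨t, mul_left_cancel₀ ha0 (by rw [ht, hc, mul_assoc])⟩
        intro x hx
        exact Ideal.mem_span_singleton.mpr
          (dvd_trans hcb (Ideal.mem_span_singleton.mp (hBb hx)))
      · rw [hIc, hAc, mul_right_comm, Ideal.span_singleton_mul_span_singleton, ← hc]

end Dir2

theorem valuation_sharp_iff_pseudoDedekind (R : Type*) [CommRing R] [IsDomain R]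
    [ValuationRing R] : IsSharpDomain R ↔ IsPseudoDedekind R := by
  exact ⟨sharp_to_pd, pd_to_sharp⟩
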